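/- If the threshold distribution μ assigns positive probability to the open interval (S, L), then Blackwell's strategy succeeds with probability strictly greater than 1/2. -/

import Mathlib

open MeasureTheory Set ENNReal

/-- If the threshold distribution assigns positive probability to the open interval
`(S, L)`, Blackwell's strategy succeeds with probability strictly greater than `1/2`. -/
theorem blackwell_bet_gt_half (S L : ℝ) (hSL : S < L)
    (μ : Measure ℝ) [IsProbabilityMeasure μ]
    (hS : μ {S} = 0) (hL : μ {L} = 0)
    (hpos : 0 < μ (Set.Ioo S L)) :
    1/2 < (1/2) * (1 - (μ (Set.Iio S)).toReal) + (1/2) * (1 - (μ (Set.Ioi L)).toReal) := by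
  have hfin : ∀ s : Set ℝ, μ s ≠ ⊤ := fun s => measure_ne_top μ s
  have hdisj : Disjoint (Set.Iio S) (Set.Ioi L) :=
    Set.disjoint_left.mpr (fun x hx hx' => absurd (lt_trans hSL hx') (not_lt.mpr hx.le))
  have hdisj2 : Disjoint (Set.Iio S ∪ Set.Ioi L) (Set.Ioo S L) := by
    rw [Set.disjoint_union_left]
    constructor
    · exact Set.disjoint_left.mpr fun x hx hx' => absurd hx'.1 (not_lt.mpr hx.le)
    · exact Set.disjoint_left.mpr fun x hx hx' => absurd hx'.2 (not_lt.mpr hx.le)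
  have key : μ (Set.Iio S) + μ (Set.Ioi L) + μ (Set.Ioo S L) ≤ 1 := by
    calc μ (Set.Iio S) + μ (Set.Ioi L) + μ (Set.Ioo S L)
        = μ (Set.Iio S ∪ Set.Ioi L) + μ (Set.Ioo S L) := by
          rw [measure_union hdisj measurableSet_Ioi]
      _ = μ ((Set.Iio S ∪ Set.Ioi L) ∪ Set.Ioo S L) := by
          rw [measure_union hdisj2 measurableSet_Ioo]
      _ ≤ μ Set.univ := measure_mono (Set.subset_univ _)
      _ = 1 := measure_univ
  have hlt : μ (Set.Iio S) + μ (Set.Ioi L) < 1 := by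
    by_contra h
    push_neg at h
    have h2 : (1 : ℝ≥0∞) + μ (Set.Ioo S L) ≤ 1 :=
      le_trans (add_le_add_left h _) key
    have : μ (Set.Ioo S L) = 0 := by
      by_contra hne
      have : (1 : ℝ≥0∞) < 1 + μ (Set.Ioo S L) :=
        ENNReal.lt_add_right one_ne_top hne
      exact absurd (lt_of_lt_of_le this h2) (lt_irrefl _)
    exact absurd this (ne_of_gt hpos)
  have ha := hfin (Set.Iio S)
  have hb := hfin (Set.Ioi L)
  have hlt' : (μ (Set.Iio S)).toReal + (μ (Set.Ioi L)).toReal < 1 := by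
    rw [← ENNReal.toReal_add ha hb]
    have := ENNReal.toReal_lt_toReal (by finiteness) (by norm_num : (1:ℝ≥0∞) ≠ ⊤) |>.mpr hlt
    simpa using this
  linarith
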